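/- Let (Λ, π, γ) be a quantified scenario such that some a ∈ A is minimal in F ∪ A with respect to ≺_Q, i.e. Q_a = ∅, and let Λ^{a/0}, Λ^{a/1} be the reduced quantified scenarios obtained by substituting 0 (resp. 1) for the a-variable of φ and removing a. Then τ_m(Σ_Λ) = Ψ_A(τ_m(Σ_{Λ^{a/0}}), τ_m(Σ_{Λ^{a/1}}), γ_a), where Ψ_A(I₁,I₂,c) = I₁ ∪ {(p₂, c₂ + c) : (p₂,c₂) ∈ I₂}. -/

import Mathlib

open scoped ENNReal

/-- A scenario `(F, A, φ, Q)`: `φ : 𝔹^F × 𝔹^A → 𝔹` is a Boolean function, and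
`Q` assigns to each attack `a ∈ A` the subset `Q_a ⊆ F` of failures observable when
deciding about `a`; the family `{Q_a}` is totally ordered by inclusion. -/
structure Scenario (F A : Type) where
  φ : (F → Bool) → (A → Bool) → Bool
  Q : A → Finset F
  chain : ∀ a a' : A, Q a ⊆ Q a' ∨ Q a' ⊆ Q a

variable {F A : Type}

/-- A strategy: for each `a ∈ A`, a map `σ_a : 𝔹^{Q_a} → 𝔹`. -/
def Strategy (Λ : Scenario F A) : Type :=
  (a : A) → ({f : F // f ∈ Λ.Q a} → Bool) → Bool

/-- The induced map `σ̂ : 𝔹^F → 𝔹^A`, `σ̂(x)_a = σ_a(x|_{Q_a})`. -/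
def hatS (Λ : Scenario F A) (σ : Strategy Λ) (x : F → Bool) : A → Bool :=
  fun a => σ a fun f => x f.1

/-- The reduced scenario `Λ^{a/b}`: substitute `b` for the `a`-variable of `φ`
and remove `a` from `A`. -/
def Scenario.reduceA [DecidableEq A] (Λ : Scenario F A) (a : A) (b : Bool) :
    Scenario F {a' : A // a' ≠ a} where
  φ := fun x y => Λ.φ x (fun a' => if h : a' = a then b else y ⟨a', h⟩)
  Q := fun a' => Λ.Q a'.1
  chain := fun a' a'' => Λ.chain a'.1 a''.1

/-- The lifted strategy `ι(σ)`: set `σ_a` identically equal to `b` and leave `σ_{a'}`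
unchanged for `a' ≠ a`. -/
def iota [DecidableEq A] (Λ : Scenario F A) (a : A) (b : Bool)
    (σ : Strategy (Λ.reduceA a b)) : Strategy Λ :=
  fun a' x => if h : a' = a then b else σ ⟨a', h⟩ x

/-- Bernoulli weight of an outcome `x ∈ 𝔹^F`:
`(∏_{f : x_f = 1} π_f) · (∏_{f : x_f = 0} (1 - π_f))`. -/
noncomputable def wght [Fintype F] (π : F → ℝ≥0∞) (x : F → Bool) : ℝ≥0∞ :=
  ∏ f, if x f then π f else 1 - π f

/-- Success probability `π̂(σ)`: the probability that `φ(x, σ̂(x)) = 1` when the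
coordinates `x_f` are independent Bernoulli(`π_f`). -/
noncomputable def probS [Fintype F] [DecidableEq F] (Λ : Scenario F A)
    (π : F → ℝ≥0∞) (σ : Strategy Λ) : ℝ≥0∞ :=
  ∑ x : F → Bool, wght π x * (if Λ.φ x (hatS Λ σ x) then 1 else 0)

/-- Cost incurred by strategy `σ` upon observing `x`: `Σ_{a : σ̂(x)_a = 1} γ_a`. -/
noncomputable def costOf [Fintype A] (Λ : Scenario F A) (γ : A → ℝ≥0∞) (σ : Strategy Λ)
    (x : F → Bool) : ℝ≥0∞ :=
  ∑ a, if hatS Λ σ x a then γ a else 0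

/-- Maximal cost `γ̂_m(σ) = max_{x ∈ 𝔹^F} Σ_{a : σ̂(x)_a = 1} γ_a`. -/
noncomputable def maxCost [Fintype F] [DecidableEq F] [Fintype A] (Λ : Scenario F A)
    (γ : A → ℝ≥0∞) (σ : Strategy Λ) : ℝ≥0∞ :=
  ⨆ x : F → Bool, costOf Λ γ σ x

/-- Expected cost `γ̂_e(σ)`. -/
noncomputable def expCost [Fintype F] [DecidableEq F] [Fintype A] (Λ : Scenario F A)
    (π : F → ℝ≥0∞) (γ : A → ℝ≥0∞) (σ : Strategy Λ) : ℝ≥0∞ :=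
  ∑ x : F → Bool, wght π x * costOf Λ γ σ x

/-- `Ψ_A(I₁,I₂,c) = I₁ ∪ {(p₂, c₂ + c) : (p₂,c₂) ∈ I₂}`. -/
def PsiA (I₁ I₂ : Set (ℝ≥0∞ × ℝ≥0∞)) (c : ℝ≥0∞) : Set (ℝ≥0∞ × ℝ≥0∞) :=
  I₁ ∪ {d | ∃ d₂ ∈ I₂, d = (d₂.1, d₂.2 + c)}

lemma probS_iota [Fintype F] [DecidableEq F] [DecidableEq A] (Λ : Scenario F A)
    (π : F → ℝ≥0∞) (a : A) (b : Bool) (σ : Strategy (Λ.reduceA a b)) :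
    probS Λ π (iota Λ a b σ) = probS (Λ.reduceA a b) π σ := rfl

lemma costOf_iota [Fintype F] [Fintype A] [DecidableEq A] (Λ : Scenario F A)
    (γ : A → ℝ≥0∞) (a : A) (b : Bool) (σ : Strategy (Λ.reduceA a b)) (x : F → Bool) :
    costOf Λ γ (iota Λ a b σ) x =
      costOf (Λ.reduceA a b) (fun a' => γ a'.1) σ x + (if b then γ a else 0) := by
  unfold costOf
  rw [Fintype.sum_eq_add_sum_compl a, add_comm]
  congr 1
  · rw [Finset.sum_subtype (p := fun a' => a' ≠ a) ({a}ᶜ : Finset A) (by simp)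
      (fun a' => if hatS Λ (iota Λ a b σ) x a' then γ a' else 0)]
    apply Finset.sum_congr rfl
    intro a' _
    simp only [hatS, iota, dif_neg a'.2]
    rfl
  · simp [hatS, iota]

lemma maxCost_iota [Fintype F] [DecidableEq F] [Fintype A] [DecidableEq A]
    (Λ : Scenario F A) (γ : A → ℝ≥0∞) (a : A) (b : Bool) (σ : Strategy (Λ.reduceA a b)) :
    maxCost Λ γ (iota Λ a b σ) =
      maxCost (Λ.reduceA a b) (fun a' => γ a'.1) σ + (if b then γ a else 0) := by
  unfold maxCost
  rw [ENNReal.iSup_add]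
  exact iSup_congr fun x => costOf_iota Λ γ a b σ x

lemma iota_restrict [DecidableEq A] (Λ : Scenario F A) (a : A) (hQa : Λ.Q a = ∅)
    (σ : Strategy Λ) (b : Bool) (hb : ∀ x, σ a x = b) :
    iota Λ a b (fun a' x => σ a'.1 x) = σ := by
  funext a' x
  unfold iota
  split
  · next h => subst h; exact (hb x).symm
  · rfl

/-- `τ_m(Σ_Λ) = Ψ_A(τ_m(Σ_{Λ^{a/0}}), τ_m(Σ_{Λ^{a/1}}), γ_a)`. -/
theorem range_tauM_eq_psiA [Fintype F] [Fintype A] [DecidableEq F] [DecidableEq A]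
    (Λ : Scenario F A) (π : F → ℝ≥0∞) (hπ : ∀ g, π g ≤ 1) (γ : A → ℝ≥0∞)
    (a : A) (hQa : Λ.Q a = ∅) :
    Set.range (fun σ : Strategy Λ => (probS Λ π σ, maxCost Λ γ σ)) =
      PsiA
        (Set.range (fun σ0 : Strategy (Λ.reduceA a false) =>
          (probS (Λ.reduceA a false) π σ0,
            maxCost (Λ.reduceA a false) (fun a' => γ a'.1) σ0)))
        (Set.range (fun σ1 : Strategy (Λ.reduceA a true) =>
          (probS (Λ.reduceA a true) π σ1,
            maxCost (Λ.reduceA a true) (fun a' => γ a'.1) σ1)))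
        (γ a) := by
  have hempty : ∀ f : {f : F // f ∈ Λ.Q a}, False := fun f =>
    Finset.eq_empty_iff_forall_notMem.mp hQa f.1 f.2
  ext d
  constructor
  · rintro ⟨σ, rfl⟩
    set b := σ a (fun f => (hempty f).elim) with hbdef
    have hb : ∀ x, σ a x = b := by
      intro x
      have : x = (fun f => (hempty f).elim) := by
        funext f; exact (hempty f).elim
      rw [this]
    have hσ := iota_restrict Λ a hQa σ b hb
    cases hb' : b
    · left
      refine ⟨fun a' x => σ a'.1 x, ?_⟩
      rw [hb'] at hσ
      conv_rhs => rw [← hσ]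
      have h1 := maxCost_iota Λ γ a false (fun a' x => σ a'.1 x)
      simp only [Bool.false_eq_true, if_false, add_zero] at h1
      exact Prod.ext (probS_iota Λ π a false _).symm h1.symm
    · right
      refine ⟨(probS (Λ.reduceA a true) π (fun a' x => σ a'.1 x),
        maxCost (Λ.reduceA a true) (fun a' => γ a'.1) (fun a' x => σ a'.1 x)),
        ⟨fun a' x => σ a'.1 x, rfl⟩, ?_⟩
      rw [hb'] at hσ
      conv_lhs => rw [← hσ]
      have h1 := maxCost_iota Λ γ a true (fun a' x => σ a'.1 x)
      simp only [if_true] at h1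
      exact Prod.ext (probS_iota Λ π a true _) h1
  · rintro (⟨σ0, rfl⟩ | ⟨d₂, ⟨σ1, rfl⟩, rfl⟩)
    · exact ⟨iota Λ a false σ0, by simp [maxCost_iota, ← probS_iota]⟩
    · exact ⟨iota Λ a true σ1, by simp [maxCost_iota, ← probS_iota]⟩
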